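/- Let 0 < q₁ ≤ q₂ < ∞ and α > 1/q₂, and set δ := 1/q₁ − 1/q₂ and q := q₂ α > 1 with conjugate q'. Let (σ_{r;s})_{s∈F}, r = 1,2, be families of numbers > 1 with (σ_{r;s}^{-1}) ∈ ℓ_{q_r}(F). For ξ > 0 define G(ξ) := {(k,s) ∈ ℕ₀ × F : σ_{1;s}^{q₁} ≤ ξ and 2^{α q₁ k} σ_{2;s}^{q₁} ≤ ξ}. Then ∑_{(k,s) ∈ G(ξ)} 2^k ≤ M ξ^{1 + δ/α}, where M := 2 ‖(σ_{2;s}^{-1})‖_{ℓ_{q₂}}^{q₂/q} ‖(σ_{1;s}^{-1})‖_{ℓ_{q₁}}^{q₁/q'}. -/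

import Mathlib

/- STATEMENT 6: the dimension bound for `G(ξ)` in the case `α > 1/q₂`
(from the proof of Theorem 2.2 of the paper).  Note
`‖(σ_{2;s}^{-1})‖_{ℓ_{q₂}}^{q₂/q} = (∑_s σ_{2;s}^{-q₂})^{1/q}` and
`‖(σ_{1;s}^{-1})‖_{ℓ_{q₁}}^{q₁/q'} = (∑_s σ_{1;s}^{-q₁})^{1/q'}`. -/

/-- Sum of distinct powers of two bounded by `t` is at most `2 t`. -/
lemma aux_geom (A : Finset ℕ) (t : ℝ) (ht : 0 ≤ t) (h : ∀ k ∈ A, (2:ℝ)^k ≤ t) :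
    ∑ k ∈ A, (2:ℝ)^k ≤ 2 * t := by
  rcases A.eq_empty_or_nonempty with rfl | hne
  · simpa using by linarith
  · set N := A.max' hne with hN
    have hsub : A ⊆ Finset.range (N+1) := fun k hk =>
      Finset.mem_range.2 (Nat.lt_succ_of_le (A.le_max' k hk))
    have h1 : (2:ℝ)^N ≤ t := h N (A.max'_mem hne)
    calc ∑ k ∈ A, (2:ℝ)^k ≤ ∑ k ∈ Finset.range (N+1), (2:ℝ)^k :=
          Finset.sum_le_sum_of_subset_of_nonneg hsub (fun k _ _ => by positivity)
      _ = ((2:ℝ)^(N+1) - 1) / (2 - 1) := geom_sum_eq (by norm_num) (N+1)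
      _ ≤ 2 * t := by
          have h2 : (2:ℝ)^(N+1) = 2 * 2^N := by ring
          rw [h2]; norm_num; linarith

theorem stmt6 (q₁ q₂ α δ q q' ξ : ℝ)
    (hq1 : 0 < q₁) (hq12 : q₁ ≤ q₂) (hα : 1 / q₂ < α)
    (hδ : δ = 1 / q₁ - 1 / q₂) (hq : q = q₂ * α) (hq1' : 1 < q)
    (hq' : 1 / q' + 1 / q = 1) (hξ : 0 < ξ)
    (σ1 σ2 : (ℕ →₀ ℕ) → ℝ) (hσ1 : ∀ s, 1 < σ1 s) (hσ2 : ∀ s, 1 < σ2 s)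
    (h1 : Summable fun s => σ1 s ^ (-q₁))
    (h2 : Summable fun s => σ2 s ^ (-q₂)) :
    (∑' p : {p : ℕ × (ℕ →₀ ℕ) //
        σ1 p.2 ^ q₁ ≤ ξ ∧ (2 : ℝ) ^ (α * q₁ * (p.1 : ℝ)) * σ2 p.2 ^ q₁ ≤ ξ},
        (2 : ℝ) ^ p.1.1) ≤
      (2 * (∑' s : ℕ →₀ ℕ, σ2 s ^ (-q₂)) ^ (1 / q) *
        (∑' s : ℕ →₀ ℕ, σ1 s ^ (-q₁)) ^ (1 / q')) * ξ ^ (1 + δ / α) := by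
  classical
  have hq2 : 0 < q₂ := lt_of_lt_of_le hq1 hq12
  have hα0 : 0 < α := lt_trans (by positivity) hα
  have hq0 : 0 < q := lt_trans one_pos hq1'
  have hq'inv : 1 / q' = 1 - 1 / q := by linarith
  have hq'pos : 0 < 1 / q' := by
    rw [hq'inv]
    have : 1 / q < 1 := by rw [div_lt_one hq0]; exact hq1'
    linarith
  have hq'0 : 0 < q' := one_div_pos.mp hq'pos
  have hconj : q.HolderConjugate q' := Real.holderConjugate_iff.mpr ⟨hq1', by
    rw [← one_div, ← one_div]; linarith⟩
  have hσ1pos : ∀ s, (0:ℝ) < σ1 s := fun s => lt_trans one_pos (hσ1 s)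
  have hσ2pos : ∀ s, (0:ℝ) < σ2 s := fun s => lt_trans one_pos (hσ2 s)
  set A1 := ∑' s : ℕ →₀ ℕ, σ1 s ^ (-q₁) with hA1def
  set A2 := ∑' s : ℕ →₀ ℕ, σ2 s ^ (-q₂) with hA2def
  have hA1 : 0 ≤ A1 := tsum_nonneg fun s => Real.rpow_nonneg (hσ1pos s).le _
  have hA2 : 0 ≤ A2 := tsum_nonneg fun s => Real.rpow_nonneg (hσ2pos s).le _
  have hRHS : 0 ≤ (2 * A2 ^ (1/q) * A1 ^ (1/q')) * ξ ^ (1 + δ/α) :=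
    mul_nonneg (mul_nonneg (mul_nonneg (by norm_num) (Real.rpow_nonneg hA2 _))
      (Real.rpow_nonneg hA1 _)) (Real.rpow_nonneg hξ.le _)
  refine tsum_le_of_sum_le' hRHS fun T => ?_
  set e := 1/(α*q₁) with he_def
  have he : 0 < e := by rw [he_def]; positivity
  -- key pointwise estimate
  have key : ∀ (k : ℕ) (s : ℕ →₀ ℕ), (2:ℝ)^(α*q₁*(k:ℝ)) * σ2 s ^ q₁ ≤ ξ →
      (2:ℝ)^k ≤ ξ ^ e * σ2 s ^ (-(1/α)) := by
    intro k s hks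
    have hσ : (0:ℝ) < σ2 s := hσ2pos s
    have hA : (0:ℝ) ≤ (2:ℝ)^(α*q₁*(k:ℝ)) * σ2 s ^ q₁ := by
      exact mul_nonneg (Real.rpow_nonneg (by norm_num) _) (Real.rpow_nonneg hσ.le _)
    have h3 := Real.rpow_le_rpow hA hks he.le
    rw [Real.mul_rpow (Real.rpow_nonneg (by norm_num) _) (Real.rpow_nonneg hσ.le _),
      ← Real.rpow_mul (by norm_num : (0:ℝ) ≤ 2), ← Real.rpow_mul hσ.le] at h3
    have h4 : α*q₁*(k:ℝ)*e = (k:ℝ) := by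
      rw [he_def]; field_simp
    have h5 : q₁ * e = 1/α := by
      rw [he_def]; field_simp
    rw [h4, h5] at h3
    have hc : (0:ℝ) < σ2 s ^ (1/α) := Real.rpow_pos_of_pos hσ _
    rw [← Real.rpow_natCast (2:ℝ) k, Real.rpow_neg hσ.le, ← div_eq_mul_inv]
    exact (le_div_iff₀ hc).2 h3
  set U : Finset (ℕ × (ℕ →₀ ℕ)) := T.image Subtype.val with hU
  have hUmem : ∀ p ∈ U, σ1 p.2 ^ q₁ ≤ ξ ∧ (2:ℝ)^(α*q₁*(p.1:ℝ)) * σ2 p.2 ^ q₁ ≤ ξ := by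
    intro p hp
    obtain ⟨⟨p', hp'⟩, _, rfl⟩ := Finset.mem_image.1 hp
    exact hp'
  set S₀ : Finset (ℕ →₀ ℕ) := U.image Prod.snd with hS₀
  have hsum1 : ∑ p ∈ T, (2:ℝ)^((p : ℕ × (ℕ →₀ ℕ)).1) = ∑ p ∈ U, (2:ℝ)^p.1 := by
    rw [hU, Finset.sum_image (fun x _ y _ h => Subtype.ext h)]
  have hfibeq : ∑ p ∈ U, (2:ℝ)^p.1
      = ∑ s ∈ S₀, ∑ p ∈ U.filter (fun p => p.2 = s), (2:ℝ)^p.1 :=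
    (Finset.sum_fiberwise_of_maps_to (fun p hp => Finset.mem_image_of_mem _ hp) _).symm
  have hfib : ∀ s ∈ S₀, ∑ p ∈ U.filter (fun p => p.2 = s), (2:ℝ)^p.1
      ≤ 2 * (ξ ^ e * σ2 s ^ (-(1/α))) := by
    intro s hs
    have hts : 0 ≤ ξ ^ e * σ2 s ^ (-(1/α)) :=
      mul_nonneg (Real.rpow_nonneg hξ.le _) (Real.rpow_nonneg (hσ2pos s).le _)
    have hEq : ∑ k ∈ (U.filter (fun p => p.2 = s)).image Prod.fst, (2:ℝ)^k
        = ∑ p ∈ U.filter (fun p => p.2 = s), (2:ℝ)^p.1 := by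
      refine Finset.sum_image ?_
      intro p hp p' hp' hpp'
      exact Prod.ext hpp' ((Finset.mem_filter.1 hp).2.trans (Finset.mem_filter.1 hp').2.symm)
    rw [← hEq]
    refine aux_geom _ _ hts ?_
    intro k hk
    obtain ⟨p, hp, rfl⟩ := Finset.mem_image.1 hk
    have hpU := (Finset.mem_filter.1 hp).1
    have hps := (Finset.mem_filter.1 hp).2
    have hc := (hUmem p hpU).2
    rw [hps] at hc
    exact key p.1 s hc
  -- Hölder
  have hHold : ∑ s ∈ S₀, σ2 s ^ (-(1/α))
      ≤ (∑ s ∈ S₀, σ2 s ^ (-q₂)) ^ (1/q) * ((S₀.card : ℝ)) ^ (1/q') := by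
    have h := Real.inner_le_Lp_mul_Lq_of_nonneg (s := S₀) (f := fun s => σ2 s ^ (-(1/α)))
      (g := fun _ => (1:ℝ)) hconj
      (fun s _ => Real.rpow_nonneg (hσ2pos s).le _) (fun s _ => zero_le_one)
    simp only [mul_one, Real.one_rpow, Finset.sum_const, nsmul_eq_mul] at h
    have hpow : ∀ s ∈ S₀, ((σ2 s ^ (-(1/α)) : ℝ)) ^ q = σ2 s ^ (-q₂) := by
      intro s _
      rw [← Real.rpow_mul (hσ2pos s).le]
      congr 1
      rw [hq]; field_simp
    rw [Finset.sum_congr rfl hpow] at h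
    simpa using h
  have hb2 : (∑ s ∈ S₀, σ2 s ^ (-q₂)) ^ (1/q) ≤ A2 ^ (1/q) :=
    Real.rpow_le_rpow (Finset.sum_nonneg fun s _ => Real.rpow_nonneg (hσ2pos s).le _)
      (Summable.sum_le_tsum S₀ (fun s _ => Real.rpow_nonneg (hσ2pos s).le _) h2) (by positivity)
  have hcard : (S₀.card : ℝ) ≤ ξ * A1 := by
    have hcs : (S₀.card : ℝ) = ∑ _s ∈ S₀, (1:ℝ) := by simp
    rw [hcs]
    have step : ∀ s ∈ S₀, (1:ℝ) ≤ ξ * σ1 s ^ (-q₁) := by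
      intro s hs
      obtain ⟨p, hpU, rfl⟩ := Finset.mem_image.1 hs
      have hle := (hUmem p hpU).1
      have hp0 : (0:ℝ) < σ1 p.2 ^ q₁ := Real.rpow_pos_of_pos (hσ1pos p.2) _
      rw [Real.rpow_neg (hσ1pos p.2).le, ← div_eq_mul_inv]
      rw [one_le_div hp0]
      exact hle
    calc ∑ _s ∈ S₀, (1:ℝ) ≤ ∑ s ∈ S₀, ξ * σ1 s ^ (-q₁) := Finset.sum_le_sum step
      _ = ξ * ∑ s ∈ S₀, σ1 s ^ (-q₁) := by rw [Finset.mul_sum]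
      _ ≤ ξ * A1 := mul_le_mul_of_nonneg_left
          (Summable.sum_le_tsum S₀ (fun s _ => Real.rpow_nonneg (hσ1pos s).le _) h1) hξ.le
  have hb1 : ((S₀.card : ℝ)) ^ (1/q') ≤ ξ ^ (1/q') * A1 ^ (1/q') := by
    calc ((S₀.card : ℝ)) ^ (1/q') ≤ (ξ * A1) ^ (1/q') :=
          Real.rpow_le_rpow (Nat.cast_nonneg _) hcard (by positivity)
      _ = ξ ^ (1/q') * A1 ^ (1/q') := Real.mul_rpow hξ.le hA1
  have hexp : e + 1/q' = 1 + δ/α := by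
    rw [he_def, hq'inv, hδ, hq]
    field_simp
    ring
  calc ∑ p ∈ T, (2:ℝ)^((p : ℕ × (ℕ →₀ ℕ)).1)
      = ∑ s ∈ S₀, ∑ p ∈ U.filter (fun p => p.2 = s), (2:ℝ)^p.1 := by rw [hsum1, hfibeq]
    _ ≤ ∑ s ∈ S₀, 2 * (ξ^e * σ2 s ^ (-(1/α))) := Finset.sum_le_sum hfib
    _ = 2 * ξ^e * ∑ s ∈ S₀, σ2 s ^ (-(1/α)) := by
        rw [Finset.mul_sum]; congr 1; ext s; ring
    _ ≤ 2 * ξ^e * ((∑ s ∈ S₀, σ2 s ^ (-q₂)) ^ (1/q) * ((S₀.card : ℝ)) ^ (1/q')) :=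
        mul_le_mul_of_nonneg_left hHold (by positivity)
    _ ≤ 2 * ξ^e * (A2 ^ (1/q) * (ξ ^ (1/q') * A1 ^ (1/q'))) := by
        refine mul_le_mul_of_nonneg_left ?_ (by positivity)
        exact mul_le_mul hb2 hb1 (Real.rpow_nonneg (Nat.cast_nonneg _) _)
          (Real.rpow_nonneg hA2 _)
    _ = (2 * A2 ^ (1/q) * A1 ^ (1/q')) * (ξ^e * ξ^(1/q')) := by ring
    _ = (2 * A2 ^ (1/q) * A1 ^ (1/q')) * ξ ^ (1 + δ/α) := by
        rw [← Real.rpow_add hξ, hexp]
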